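/- For every ε with 0 < ε < 1/3 and every noiseless alternating binary protocol π of length n, there exists a deterministic robust interactive protocol Π with noiseless feedback over the binary alphabet {0,1} (whose order of speaking may depend on the noise, via the jointly known received bits), of length N ≤ c·n/ε² for an absolute constant c > 0, such that for every input pair (x,y) and every noise pattern with at most (1/3 − ε)·N corrupted rounds (bit flips), both parties output the transcript π(x,y). -/

import Mathlib

set_option maxHeartbeats 1000000


/-- A noiseless alternating binary protocol: Alice sends a bit in each odd round
(i.e., when the number of previously communicated bits is even) and Bob in each even
round, the bit being a fixed function of the sender's input and the past bits. -/
structure AltProtocol (X Y : Type) where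
  nextA : X → List Bool → Bool
  nextB : Y → List Bool → Bool

/-- The transcript of the first `n` rounds of the noiseless protocol on inputs `x, y`. -/
def AltProtocol.transcript {X Y : Type} (pr : AltProtocol X Y) (x : X) (y : Y) :
    ℕ → List Bool
  | 0 => []
  | n+1 =>
    let T := pr.transcript x y n
    T ++ [if T.length % 2 = 0 then pr.nextA x T else pr.nextB y T]

/-- A deterministic interactive protocol with noiseless feedback, of length `N` over
alphabet `Γ`: a speaker function on strings of received symbols (`true` = Alice),
next-symbol functions for each party (input and received symbols so far), and output
functions for each party (input and the full sequence of received symbols). -/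
structure FeedbackProtocol (Γ X Y O : Type) (N : ℕ) where
  ord : List Γ → Bool
  nextA : X → List Γ → Γ
  nextB : Y → List Γ → Γ
  outA : X → List Γ → O
  outB : Y → List Γ → O

/-- The symbol sent in round `i` of the execution with noise pattern `r`
(the received symbols): the speaker of round `i` is `ord` applied to the received
symbols so far, and it sends according to its next-symbol function. -/
def FeedbackProtocol.sent {Γ X Y O : Type} {N : ℕ} (P : FeedbackProtocol Γ X Y O N)
    (x : X) (y : Y) (r : Fin N → Γ) (i : Fin N) : Γ :=
  let h := (List.ofFn r).take i.val
  if P.ord h then P.nextA x h else P.nextB y h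

/-- The number of corrupted rounds: rounds where the sent symbol differs from the
received one. -/
def FeedbackProtocol.corruptions {Γ X Y O : Type} [DecidableEq Γ] {N : ℕ}
    (P : FeedbackProtocol Γ X Y O N) (x : X) (y : Y) (r : Fin N → Γ) : ℕ :=
  (Finset.univ.filter fun i : Fin N => P.sent x y r i ≠ r i).card

/-- The protocol has a fixed order of speaking if the speaker depends only on the
round number. -/
def FeedbackProtocol.FixedOrder {Γ X Y O : Type} {N : ℕ}
    (P : FeedbackProtocol Γ X Y O N) : Prop :=
  ∀ h h' : List Γ, h.length = h'.length → P.ord h = P.ord h'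

namespace FB

variable {X Y : Type}

/-! ### Stack layer -/

/-- Alice's own-slots consistency check (depends on `x` only). Stack is top-first. -/
def oksA (pr : AltProtocol X Y) (x : X) : List Bool → Bool
  | [] => true
  | b :: t => oksA pr x t && (if t.length % 2 = 0 then b == pr.nextA x t.reverse else true)

def oksB (pr : AltProtocol X Y) (y : Y) : List Bool → Bool
  | [] => true
  | b :: t => oksB pr y t && (if t.length % 2 = 0 then true else b == pr.nextB y t.reverse)

/-- next honest bit for the slot to be pushed onto `t` -/
def nxt (pr : AltProtocol X Y) (x : X) (y : Y) (t : List Bool) : Bool :=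
  if t.length % 2 = 0 then pr.nextA x t.reverse else pr.nextB y t.reverse

/-- whether the owner of the next slot is self-consistent -/
def okN (pr : AltProtocol X Y) (x : X) (y : Y) (t : List Bool) : Bool :=
  if t.length % 2 = 0 then oksA pr x t else oksB pr y t

/-- coherence flag of pushing `b` onto `t` -/
def flag (pr : AltProtocol X Y) (x : X) (y : Y) (t : List Bool) (b : Bool) : Bool :=
  okN pr x y t && (b == nxt pr x y t)

/-- the list of coherence flags of a stack (top first) -/
def fl (pr : AltProtocol X Y) (x : X) (y : Y) : List Bool → List Bool
  | [] => []
  | b :: t => flag pr x y t b :: fl pr x y t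

def inco (pr : AltProtocol X Y) (x : X) (y : Y) (S : List Bool) : ℕ :=
  (fl pr x y S).count false

def psi (pr : AltProtocol X Y) (x : X) (y : Y) (S : List Bool) : ℤ :=
  (S.length : ℤ) - 3 * (inco pr x y S : ℤ)

/-- apply a decoded symbol to the stack: (false,b) = push b, (true,false) = pop 2,
(true,true) = no-op. -/
def applySym : Bool × Bool → List Bool → List Bool
  | (false, b), S => b :: S
  | (true, false), S => S.drop 2
  | (true, true), S => S

/-- the intended symbol of the current speaker -/
def aimS (pr : AltProtocol X Y) (x : X) (y : Y) (S : List Bool) : Bool × Bool :=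
  if okN pr x y S then (false, nxt pr x y S) else (true, false)

/-- structural invariant: the flag list is a `Chain'`-controlled part followed by
an all-true part -/
def INV (pr : AltProtocol X Y) (x : X) (y : Y) (S : List Bool) : Prop :=
  ∃ u t, fl pr x y S = u ++ t ∧ (∀ c ∈ t, c = true) ∧
    List.Chain' (fun a b => a = false ∨ b = false) u

/-! ### Walk layer -/

inductive W where
  | root : W
  | mid (m : Bool) : W
  | ray (p : Bool × Bool) (d : ℕ) : W
deriving DecidableEq

variable (κ : ℕ)

def rho : W → (Bool × Bool) → ℤ
  | .root, _ => 6*κ + 1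
  | .mid m, a => if m = a.1 then 6*κ else 6*κ + 3
  | .ray p d, a => if p = a then 6*κ - d else 6*κ + 1 + d

def dlt : W → (Bool × Bool) → ℤ
  | .ray p d, a => if p = a then 0 else (d : ℤ) - 1
  | _, _ => 0

def steer : W → (Bool × Bool) → Bool
  | .root, a => a.1
  | .mid m, a => if m = a.1 then a.2 else false
  | .ray p _, a => p == a

abbrev St := List Bool × W

def stepSt : St → Bool → St
  | (S, .root), b => (S, .mid b)
  | (S, .mid m), b => (S, .ray (m, b) 1)
  | (S, .ray p d), true =>
      if d + 1 < 6*κ then (S, .ray p (d+1)) else (applySym p S, .root)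
  | (S, .ray p d), false =>
      if d ≤ 1 then (S, .root) else (S, .ray p (d-1))

def Amp : ℤ := κ * (6*κ + 2)

def WFw : W → Prop
  | .ray _ d => 1 ≤ d ∧ d ≤ 6*κ - 1
  | _ => True

variable (pr : AltProtocol X Y) (x : X) (y : Y)

def J (st : St) : ℤ :=
  Amp κ * psi pr x y st.1 - κ * rho κ st.2 (aimS pr x y st.1)
    - (κ+1) * dlt st.2 (aimS pr x y st.1)

/-- honest bit -/
def hb (st : St) : Bool := steer st.2 (aimS pr x y st.1)

def stOf (h : List Bool) : St := h.foldl (stepSt κ) ([], .root)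

def flips : St → List Bool → ℕ
  | _, [] => 0
  | st, b :: l => (if b = hb pr x y st then 0 else 1) + flips (stepSt κ st b) l

/-! ### Stack lemmas -/

lemma fl_length (S : List Bool) : (fl pr x y S).length = S.length := by
  induction S with
  | nil => rfl
  | cons b t ih => simp [fl, ih]

lemma fl_drop (S : List Bool) (m : ℕ) : fl pr x y (S.drop m) = (fl pr x y S).drop m := by
  induction S generalizing m with
  | nil => simp [fl]
  | cons b t ih =>
    cases m with
    | zero => rfl
    | succ m => simpa [fl] using ih m

lemma inco_cons (b : Bool) (t : List Bool) :
    inco pr x y (b :: t) = inco pr x y t + (if flag pr x y t b then 0 else 1) := by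
  by_cases h : flag pr x y t b = true
  · simp [inco, fl, List.count_cons, h]
  · simp only [Bool.not_eq_true] at h
    simp [inco, fl, List.count_cons, h]

lemma bothok_inco (S : List Bool) (hA : oksA pr x S = true) (hB : oksB pr y S = true) :
    inco pr x y S = 0 := by
  induction S with
  | nil => rfl
  | cons b t ih =>
    rw [oksA, Bool.and_eq_true] at hA
    rw [oksB, Bool.and_eq_true] at hB
    have ht := ih hA.1 hB.1
    have hflag : flag pr x y t b = true := by
      unfold flag okN nxt
      by_cases hp : t.length % 2 = 0
      · have := hA.2; rw [if_pos hp] at this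
        simp [hp, hA.1, this]
      · have := hB.2; rw [if_neg hp] at this
        simp [hp, hB.1, this]
    rw [inco_cons, ht, if_pos hflag]

lemma inco_zero_ok (S : List Bool) (h : inco pr x y S = 0) :
    oksA pr x S = true ∧ oksB pr y S = true := by
  induction S with
  | nil => exact ⟨rfl, rfl⟩
  | cons b t ih =>
    rw [inco_cons] at h
    have ht : inco pr x y t = 0 := by omega
    have hflag : flag pr x y t b = true := by
      by_cases hf : flag pr x y t b = true
      · exact hf
      · rw [if_neg hf] at h; omega
    obtain ⟨hA, hB⟩ := ih ht
    rw [flag, Bool.and_eq_true] at hflag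
    constructor
    · rw [oksA, Bool.and_eq_true]
      refine ⟨hA, ?_⟩
      by_cases hp : t.length % 2 = 0
      · rw [if_pos hp]
        have := hflag.2
        rwa [nxt, if_pos hp] at this
      · rw [if_neg hp]
    · rw [oksB, Bool.and_eq_true]
      refine ⟨hB, ?_⟩
      by_cases hp : t.length % 2 = 0
      · rw [if_pos hp]
      · rw [if_neg hp]
        have := hflag.2
        rwa [nxt, if_neg hp] at this

/-- key: if the top flag is true and the flag of a new push is true, everything is clean -/
lemma top_flag_clean (c : Bool) (S : List Bool) (b : Bool)
    (htop : flag pr x y S c = true) (hnew : flag pr x y (c :: S) b = true) :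
    inco pr x y (c :: S) = 0 := by
  rw [flag, Bool.and_eq_true] at htop hnew
  have hoknew := hnew.1
  have hparity : (c :: S).length % 2 = 0 ↔ ¬ (S.length % 2 = 0) := by
    simp only [List.length_cons]; omega
  apply bothok_inco
  · by_cases hp : S.length % 2 = 0
    · rw [oksA, Bool.and_eq_true]
      have hok : oksA pr x S = true := by
        have := htop.1; rwa [okN, if_pos hp] at this
      refine ⟨hok, ?_⟩
      rw [if_pos hp]
      have := htop.2; rwa [nxt, if_pos hp] at this
    · rw [okN, if_pos (hparity.mpr hp)] at hoknew
      exact hoknew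
  · by_cases hp : S.length % 2 = 0
    · have hodd : ¬ ((c :: S).length % 2 = 0) := by
        simp only [List.length_cons]; omega
      rw [okN, if_neg hodd] at hoknew
      exact hoknew
    · rw [oksB, Bool.and_eq_true]
      have hok : oksB pr y S = true := by
        have := htop.1; rwa [okN, if_neg hp] at this
      refine ⟨hok, ?_⟩
      rw [if_neg hp]
      have := htop.2; rwa [nxt, if_neg hp] at this

lemma inco_pos_false_mem (S : List Bool) (h : 1 ≤ inco pr x y S) :
    false ∈ fl pr x y S := by
  by_contra hc
  have : (fl pr x y S).count false = 0 := List.count_eq_zero.mpr hc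
  rw [inco] at h; omega

lemma INV_push (S : List Bool) (b : Bool) (h : INV pr x y S) : INV pr x y (b :: S) := by
  obtain ⟨u, t, hsplit, htt, hch⟩ := h
  have hfl : fl pr x y (b :: S) = flag pr x y S b :: fl pr x y S := rfl
  by_cases hf : flag pr x y S b = true
  · by_cases hz : inco pr x y S = 0
    · refine ⟨[], flag pr x y S b :: fl pr x y S, by simp [hfl], ?_, List.isChain_nil⟩
      intro c hc
      rcases List.mem_cons.mp hc with h1 | h2
      · rw [h1, hf]
      · by_contra hcf
        have : c = false := by cases c <;> simp_all
        rw [inco] at hz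
        have := List.count_pos_iff.mpr (this ▸ h2)
        omega
    · -- top flag must be false
      have htop : ∃ c S₀, S = c :: S₀ ∧ flag pr x y S₀ c = false := by
        cases S with
        | nil => exact absurd rfl hz
        | cons c S₀ =>
          refine ⟨c, S₀, rfl, ?_⟩
          by_cases htc : flag pr x y S₀ c = true
          · exact absurd (top_flag_clean pr x y c S₀ b htc hf) hz
          · simpa using htc
      obtain ⟨c, S₀, hS, htf⟩ := htop
      have hune : u ≠ [] := by
        intro hu
        rw [hu, List.nil_append] at hsplit
        have hmem : false ∈ fl pr x y S :=
          inco_pos_false_mem pr x y S (by omega)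
        rw [hsplit] at hmem
        have := htt false hmem
        simp at this
      obtain ⟨hd, u', rfl⟩ := List.exists_cons_of_ne_nil hune
      have hhd : hd = false := by
        have h1 : (fl pr x y S).head? = some (flag pr x y S₀ c) := by
          rw [hS]; rfl
        rw [hsplit] at h1
        simp only [List.cons_append, List.head?_cons, Option.some.injEq] at h1
        rw [h1, htf]
      refine ⟨flag pr x y S b :: hd :: u', t, by rw [hfl, hsplit]; rfl, htt, ?_⟩
      apply List.isChain_cons_cons.mpr
      exact ⟨Or.inr hhd, hch⟩
  · refine ⟨false :: u, t, ?_, htt, ?_⟩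
    · rw [hfl, hsplit]
      simp only [Bool.not_eq_true] at hf
      rw [hf]; rfl
    · apply List.isChain_cons.mpr
      exact ⟨fun z _ => Or.inl rfl, hch⟩

lemma INV_drop (S : List Bool) (m : ℕ) (h : INV pr x y S) : INV pr x y (S.drop m) := by
  obtain ⟨u, t, hsplit, htt, hch⟩ := h
  refine ⟨u.drop m, t.drop (m - u.length), ?_, ?_, ?_⟩
  · rw [fl_drop, hsplit, List.drop_append]
  · intro c hc; exact htt c (List.mem_of_mem_drop hc)
  · exact hch.drop m

lemma INV_apply (S : List Bool) (p : Bool × Bool) (h : INV pr x y S) :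
    INV pr x y (applySym p S) := by
  obtain ⟨pa, pb⟩ := p
  cases pa
  · exact INV_push pr x y S pb h
  · cases pb
    · exact INV_drop pr x y S 2 h
    · exact h

lemma count_false_drop_le (l : List Bool) (m : ℕ) :
    l.count false ≤ (l.drop m).count false + m := by
  conv_lhs => rw [← List.take_append_drop m l]
  rw [List.count_append]
  have h1 : (l.take m).count false ≤ (l.take m).length := List.count_le_length
  have h2 : (l.take m).length ≤ m := List.length_take_le _ _
  omega

lemma psi_apply_ge (S : List Bool) (p : Bool × Bool) :
    psi pr x y (applySym p S) ≥ psi pr x y S - 2 := by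
  obtain ⟨pa, pb⟩ := p
  cases pa
  · -- push
    show psi pr x y (pb :: S) ≥ _
    rw [psi, psi, inco_cons]
    simp only [List.length_cons]
    by_cases hf : flag pr x y S pb = true
    · rw [if_pos hf]; push_cast; omega
    · rw [if_neg hf]; push_cast; omega
  · cases pb
    · -- pop 2
      show psi pr x y (S.drop 2) ≥ _
      rw [psi, psi]
      have h1 : (S.drop 2).length = S.length - 2 := List.length_drop
      have h2 : inco pr x y (S.drop 2) ≤ inco pr x y S := by
        rw [inco, inco, fl_drop]
        exact List.Sublist.count_le false (List.drop_sublist 2 _)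
      have h3 : inco pr x y S ≤ inco pr x y (S.drop 2) + 2 := by
        rw [inco, inco, fl_drop]
        exact count_false_drop_le _ 2
      have h4 : S.length - 2 + 2 ≥ S.length := by omega
      push_cast
      omega
    · -- noop
      show psi pr x y S ≥ _
      omega

lemma okN_small (S : List Bool) (h : S.length ≤ 1) : okN pr x y S = true := by
  match S, h with
  | [], _ => rfl
  | [b], _ =>
    show okN pr x y [b] = true
    rw [okN]
    norm_num
    rw [oksB]
    norm_num [oksB]

lemma notok_inco (S : List Bool) (h : okN pr x y S = false) : 1 ≤ inco pr x y S := by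
  by_contra hc
  have hz : inco pr x y S = 0 := by omega
  obtain ⟨hA, hB⟩ := inco_zero_ok pr x y S hz
  rw [okN] at h
  by_cases hp : S.length % 2 = 0
  · rw [if_pos hp] at h; rw [hA] at h; exact Bool.true_eq_false.mp h
  · rw [if_neg hp] at h; rw [hB] at h; exact Bool.true_eq_false.mp h

lemma psi_apply_honest (S : List Bool) (h : INV pr x y S) :
    psi pr x y (applySym (aimS pr x y S) S) ≥ psi pr x y S + 1 := by
  rw [aimS]
  by_cases hok : okN pr x y S = true
  · rw [if_pos hok]
    show psi pr x y (nxt pr x y S :: S) ≥ _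
    have hf : flag pr x y S (nxt pr x y S) = true := by
      rw [flag, hok]; simp
    rw [psi, psi, inco_cons, if_pos hf]
    simp only [List.length_cons]
    push_cast; omega
  · rw [if_neg hok]
    show psi pr x y (S.drop 2) ≥ _
    have hok' : okN pr x y S = false := by simpa using hok
    have hlen : 2 ≤ S.length := by
      by_contra hc
      rw [okN_small pr x y S (by omega)] at hok'
      exact Bool.true_eq_false.mp hok'
    obtain ⟨c1, S1, rfl⟩ : ∃ c1 S1, S = c1 :: S1 := by
      cases S with
      | nil => simp at hlen
      | cons a b => exact ⟨a, b, rfl⟩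
    obtain ⟨c2, S2, rfl⟩ : ∃ c2 S2, S1 = c2 :: S2 := by
      cases S1 with
      | nil => simp at hlen
      | cons a b => exact ⟨a, b, rfl⟩
    have hnotboth : ¬ (flag pr x y (c2 :: S2) c1 = true ∧ flag pr x y S2 c2 = true) := by
      rintro ⟨h1, h2⟩
      have := top_flag_clean pr x y c2 S2 c1 h2 h1
      have hz : inco pr x y (c1 :: c2 :: S2) = 0 := by
        rw [inco_cons, this, if_pos h1]
      obtain ⟨hA, hB⟩ := inco_zero_ok pr x y _ hz
      rw [okN] at hok'
      by_cases hp : (c1 :: c2 :: S2).length % 2 = 0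
      · rw [if_pos hp, hA] at hok'; exact Bool.true_eq_false.mp hok'
      · rw [if_neg hp, hB] at hok'; exact Bool.true_eq_false.mp hok'
    show psi pr x y S2 ≥ _
    rw [psi, psi, inco_cons, inco_cons]
    simp only [List.length_cons]
    by_cases hf1 : flag pr x y (c2 :: S2) c1 = true
    · have hf2 : ¬ flag pr x y S2 c2 = true := fun hf2 => hnotboth ⟨hf1, hf2⟩
      rw [if_pos hf1, if_neg hf2]
      push_cast; omega
    · rw [if_neg hf1]
      by_cases hf2 : flag pr x y S2 c2 = true
      · rw [if_pos hf2]; push_cast; omega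
      · rw [if_neg hf2]; push_cast; omega

/-! ### Per-round lemma -/

lemma rho_nonneg (w : W) (a : Bool × Bool) (h : WFw κ w) : 0 ≤ rho κ w a := by
  cases w with
  | root => simp [rho]; positivity
  | mid m =>
    simp only [rho]
    by_cases hm : m = a.1 <;> simp [hm] <;> positivity
  | ray p d =>
    obtain ⟨h1, h2⟩ := h
    simp only [rho]
    by_cases hp : p = a <;> simp [hp] <;> [skip; positivity]
    have : (d : ℤ) ≤ 6 * κ - 1 := by
      have : (d : ℤ) ≤ (6 * κ - 1 : ℕ) := by exact_mod_cast h2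
      have h0 : 1 ≤ 6 * κ := by omega
      push_cast [h0] at this ⊢
      omega
    linarith

lemma dlt_nonneg (w : W) (a : Bool × Bool) (h : WFw κ w) : 0 ≤ dlt w a := by
  cases w with
  | root => simp [dlt]
  | mid m => simp [dlt]
  | ray p d =>
    obtain ⟨h1, h2⟩ := h
    simp only [dlt]
    by_cases hp : p = a <;> simp [hp]
    have : (1 : ℤ) ≤ d := by exact_mod_cast h1
    linarith

lemma Amp_nonneg : 0 ≤ Amp κ := by
  rw [Amp]; positivity

lemma main_step (hκ : 1 ≤ κ) (st : St) (hI : INV pr x y st.1) (hW : WFw κ st.2) (b : Bool) :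
    INV pr x y (stepSt κ st b).1 ∧ WFw κ (stepSt κ st b).2 ∧
    J κ pr x y (stepSt κ st b) ≥ J κ pr x y st - (2*κ+1) ∧
    (b = hb pr x y st → J κ pr x y (stepSt κ st b) ≥ J κ pr x y st + κ) := by
  obtain ⟨S, w⟩ := st
  have hA0 : (0:ℤ) ≤ Amp κ := Amp_nonneg κ
  have hκZ : (1:ℤ) ≤ κ := by exact_mod_cast hκ
  set a := aimS pr x y S with ha
  cases w with
  | root =>
    have hstep : stepSt κ (S, .root) b = (S, .mid b) := rfl
    rw [hstep]
    have hJ1 : J κ pr x y (S, W.mid b) =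
        Amp κ * psi pr x y S - κ * (if b = a.1 then 6*(κ:ℤ) else 6*κ+3) := by
      rw [J]; simp only [rho, dlt, ← ha]; ring
    have hJ0 : J κ pr x y (S, W.root) =
        Amp κ * psi pr x y S - κ * (6*(κ:ℤ)+1) := by
      rw [J]; simp only [rho, dlt, ← ha]; ring
    refine ⟨hI, trivial, ?_, ?_⟩
    · rw [hJ1, hJ0]
      by_cases hm : b = a.1
      · rw [if_pos hm]; linarith
      · rw [if_neg hm]; linarith
    · intro hhb
      have hm : b = a.1 := hhb
      rw [hJ1, hJ0, if_pos hm]; linarith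
  | mid m =>
    have hstep : stepSt κ (S, .mid m) b = (S, .ray (m, b) 1) := rfl
    rw [hstep]
    have hJ1 : J κ pr x y (S, W.ray (m,b) 1) =
        Amp κ * psi pr x y S - κ * (if (m,b) = a then 6*(κ:ℤ) - 1 else 6*κ+2) := by
      rw [J]; simp only [rho, dlt, ← ha]
      by_cases hp : (m,b) = a
      · simp only [if_pos hp]; push_cast; ring
      · simp only [if_neg hp]; push_cast; ring
    have hJ0 : J κ pr x y (S, W.mid m) =
        Amp κ * psi pr x y S - κ * (if m = a.1 then 6*(κ:ℤ) else 6*κ+3) := by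
      rw [J]; simp only [rho, dlt, ← ha]; ring
    refine ⟨hI, ⟨le_refl 1, by omega⟩, ?_, ?_⟩
    · rw [hJ1, hJ0]
      by_cases hp : (m,b) = a
      · have hm : m = a.1 := by rw [← hp]
        rw [if_pos hp, if_pos hm]; linarith
      · rw [if_neg hp]
        by_cases hm : m = a.1
        · rw [if_pos hm]; linarith
        · rw [if_neg hm]; linarith
    · intro hhb
      rw [hb, steer, ← ha] at hhb
      rw [hJ1, hJ0]
      by_cases hm : m = a.1
      · rw [if_pos hm] at hhb
        have hp : (m,b) = a := by
          rw [hhb, hm]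
        rw [if_pos hp, if_pos hm]; linarith
      · rw [if_neg hm] at hhb
        have hp : (m,b) ≠ a := fun hc => hm (by rw [← hc])
        rw [if_neg hp, if_neg hm]; linarith
  | ray p d =>
    obtain ⟨hd1, hd2⟩ := hW
    have hd2' : (d:ℤ) ≤ 6*κ - 1 := by
      have h1 : (d:ℤ) ≤ ((6*κ - 1 : ℕ) : ℤ) := by exact_mod_cast hd2
      have h0 : 1 ≤ 6*κ := by omega
      push_cast [h0] at h1
      omega
    have hd1' : (1:ℤ) ≤ d := by exact_mod_cast hd1
    have hbray : hb pr x y (S, W.ray p d) = (p == a) := rfl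
    have hJray : ∀ e : ℕ, J κ pr x y (S, W.ray p e) =
        Amp κ * psi pr x y S - κ * (if p = a then 6*(κ:ℤ) - e else 6*κ+1+e)
          - (κ+1) * (if p = a then 0 else (e:ℤ) - 1) := by
      intro e
      rw [J]; simp only [rho, dlt, ← ha]
    have hJroot : ∀ T, J κ pr x y (T, W.root) =
        Amp κ * psi pr x y T - κ * (6*(κ:ℤ)+1) := by
      intro T
      rw [J]; simp only [rho, dlt]; ring
    cases b with
    | false =>
      have hfalse : (false = (p == a)) ↔ p ≠ a := by
        constructor
        · intro h hc
          rw [hc] at h; simp at h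
        · intro h
          simp [h]
      by_cases hdle : d ≤ 1
      · have hd : d = 1 := by omega
        subst hd
        have hstep : stepSt κ (S, .ray p 1) false = (S, .root) := by
          rw [stepSt, if_pos (le_refl 1)]
        rw [hstep]
        refine ⟨hI, trivial, ?_, ?_⟩
        · rw [hJray 1, hJroot]
          by_cases hp : p = a
          · rw [if_pos hp, if_pos hp]; push_cast; linarith
          · rw [if_neg hp, if_neg hp]; push_cast; linarith
        · intro hhb
          rw [hbray] at hhb
          have hp : p ≠ a := hfalse.mp hhb
          rw [hJray 1, hJroot, if_neg hp, if_neg hp]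
          push_cast; linarith
      · have hstep : stepSt κ (S, .ray p d) false = (S, .ray p (d-1)) := by
          rw [stepSt, if_neg hdle]
        rw [hstep]
        have hdm : (((d - 1 : ℕ)) : ℤ) = (d:ℤ) - 1 := by
          have : 1 ≤ d := hd1
          push_cast [this]
          ring
        refine ⟨hI, ⟨by omega, by omega⟩, ?_, ?_⟩
        · rw [hJray (d-1), hJray d]
          by_cases hp : p = a
          · rw [if_pos hp, if_pos hp, if_pos hp, if_pos hp, hdm]; linarith
          · rw [if_neg hp, if_neg hp, if_neg hp, if_neg hp, hdm]; linarith
        · intro hhb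
          rw [hbray] at hhb
          have hp : p ≠ a := hfalse.mp hhb
          rw [hJray (d-1), hJray d, if_neg hp, if_neg hp, if_neg hp, if_neg hp, hdm]
          linarith
    | true =>
      by_cases hlt : d + 1 < 6*κ
      · have hstep : stepSt κ (S, .ray p d) true = (S, .ray p (d+1)) := by
          rw [stepSt, if_pos hlt]
        rw [hstep]
        have hdp : (((d + 1 : ℕ)) : ℤ) = (d:ℤ) + 1 := by push_cast; ring
        refine ⟨hI, ⟨by omega, by omega⟩, ?_, ?_⟩
        · rw [hJray (d+1), hJray d]
          by_cases hp : p = a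
          · rw [if_pos hp, if_pos hp, if_pos hp, if_pos hp, hdp]; linarith
          · rw [if_neg hp, if_neg hp, if_neg hp, if_neg hp, hdp]; linarith
        · intro hhb
          rw [hbray] at hhb
          have hp : p = a := by
            have := hhb.symm
            rwa [beq_iff_eq] at this
          rw [hJray (d+1), hJray d, if_pos hp, if_pos hp, if_pos hp, if_pos hp, hdp]
          linarith
      · have hstep : stepSt κ (S, .ray p d) true = (applySym p S, .root) := by
          rw [stepSt, if_neg hlt]
        rw [hstep]
        have hdval : (d:ℤ) = 6*κ - 1 := by omega
        have hpsige := psi_apply_ge pr x y S p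
        have hInew : INV pr x y (applySym p S) := INV_apply pr x y S p hI
        have hAmul : Amp κ * (psi pr x y S - 2) ≤ Amp κ * psi pr x y (applySym p S) :=
          mul_le_mul_of_nonneg_left hpsige hA0
        have hAmpeq : Amp κ = 6*(κ:ℤ)^2 + 2*(κ:ℤ) := by rw [Amp]; push_cast; ring
        have e1 : Amp κ * (psi pr x y S - 2) = Amp κ * psi pr x y S - 2 * Amp κ := by ring
        have e2 : Amp κ * (psi pr x y S + 1) = Amp κ * psi pr x y S + Amp κ := by ring
        refine ⟨hInew, trivial, ?_, ?_⟩
        · rw [hJroot, hJray d]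
          by_cases hp : p = a
          · have hpsih : psi pr x y S + 1 ≤ psi pr x y (applySym p S) := by
              rw [hp]; exact psi_apply_honest pr x y S hI
            have hAmul2 : Amp κ * (psi pr x y S + 1) ≤ Amp κ * psi pr x y (applySym p S) :=
              mul_le_mul_of_nonneg_left hpsih hA0
            rw [if_pos hp, if_pos hp, hdval]
            linarith [hAmpeq, hAmul2, e2, hκZ]
          · rw [if_neg hp, if_neg hp, hdval]
            linarith [hAmpeq, hAmul, e1, hκZ]
        · intro hhb
          rw [hbray] at hhb
          have hp : p = a := by
            have := hhb.symm
            rwa [beq_iff_eq] at this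
          have hpsih : psi pr x y S + 1 ≤ psi pr x y (applySym p S) := by
            rw [hp]; exact psi_apply_honest pr x y S hI
          have hAmul2 : Amp κ * (psi pr x y S + 1) ≤ Amp κ * psi pr x y (applySym p S) :=
            mul_le_mul_of_nonneg_left hpsih hA0
          rw [hJroot, hJray d, if_pos hp, if_pos hp, hdval]
          linarith [hAmpeq, hAmul2, e2, hκZ]

/-! ### Run lemma -/

lemma run (hκ : 1 ≤ κ) (l : List Bool) (st : St) (hI : INV pr x y st.1) (hW : WFw κ st.2) :
    INV pr x y (l.foldl (stepSt κ) st).1 ∧ WFw κ (l.foldl (stepSt κ) st).2 ∧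
    J κ pr x y (l.foldl (stepSt κ) st) ≥
      J κ pr x y st + κ * l.length - (3*κ+1) * flips κ pr x y st l := by
  induction l generalizing st with
  | nil =>
    refine ⟨hI, hW, ?_⟩
    simp [flips]
  | cons b rest ih =>
    obtain ⟨hI', hW', hge, hhon⟩ := main_step κ pr x y hκ st hI hW b
    obtain ⟨iI, iW, iJ⟩ := ih (stepSt κ st b) hI' hW'
    have hfold : (b :: rest).foldl (stepSt κ) st = rest.foldl (stepSt κ) (stepSt κ st b) := rfl
    have hflips : flips κ pr x y st (b :: rest) =
        (if b = hb pr x y st then 0 else 1) + flips κ pr x y (stepSt κ st b) rest := rfl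
    rw [hfold, hflips]
    refine ⟨iI, iW, ?_⟩
    by_cases hbh : b = hb pr x y st
    · have h1 := hhon hbh
      rw [if_pos hbh]
      simp only [List.length_cons]
      push_cast
      push_cast at iJ
      linarith
    · rw [if_neg hbh]
      simp only [List.length_cons]
      push_cast
      push_cast at iJ
      linarith

/-! ### Soundness of decoding -/

lemma allcoh_transcript (S : List Bool) (h : inco pr x y S = 0) :
    S.reverse = pr.transcript x y S.length := by
  induction S with
  | nil => rfl
  | cons b t ih =>
    rw [inco_cons] at h
    have ht : inco pr x y t = 0 := by omega
    have hf : flag pr x y t b = true := by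
      by_cases hf : flag pr x y t b = true
      · exact hf
      · rw [if_neg hf] at h; omega
    have hT := ih ht
    rw [flag, Bool.and_eq_true, beq_iff_eq] at hf
    have hb : b = nxt pr x y t := hf.2
    show (b :: t).reverse = pr.transcript x y (t.length + 1)
    rw [List.reverse_cons, AltProtocol.transcript]
    simp only [← hT]
    congr 1
    rw [hb, nxt]
    simp [List.length_reverse]

lemma transcript_length (m : ℕ) : (pr.transcript x y m).length = m := by
  induction m with
  | zero => rfl
  | succ m ih =>
    rw [AltProtocol.transcript]
    simp [ih]

lemma transcript_take (m n : ℕ) (h : n ≤ m) :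
    (pr.transcript x y m).take n = pr.transcript x y n := by
  induction m with
  | zero =>
    have : n = 0 := by omega
    subst this
    rfl
  | succ m ih =>
    by_cases hn : n ≤ m
    · simp only [AltProtocol.transcript]
      rw [List.take_append_of_le_length (by rw [transcript_length]; exact hn)]
      exact ih hn
    · have : n = m + 1 := by omega
      subst this
      exact List.take_of_length_le (by rw [transcript_length])

theorem chain_len : ∀ (u : List Bool),
    List.Chain' (fun a b => a = false ∨ b = false) u →
    u.length ≤ 2 * u.count false + 1
  | [], _ => by simp
  | (false :: v), h => by
    have := chain_len v h.tail
    simp only [List.length_cons, List.count_cons]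
    simp
    omega
  | (true :: []), _ => by simp
  | (true :: c :: v'), h => by
    have hR : (true = false ∨ c = false) := (List.isChain_cons_cons.mp h).1
    have hc : c = false := by
      rcases hR with h1 | h2
      · exact absurd h1 (by simp)
      · exact h2
    subst hc
    have hch' : List.Chain' (fun a b => a = false ∨ b = false) v' :=
      ((List.isChain_cons_cons.mp h).2).tail
    have := chain_len v' hch'
    simp only [List.length_cons, List.count_cons]
    simp
    omega

lemma count_false_all_true (t : List Bool) (htt : ∀ c ∈ t, c = true) :
    t.count false = 0 := by
  rw [List.count_eq_zero]
  intro hmem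
  have := htt false hmem
  simp at this

lemma decode_ok (S : List Bool) (n : ℕ) (hI : INV pr x y S)
    (hpsi : (n : ℤ) + 1 ≤ psi pr x y S) :
    (S.reverse).take n = pr.transcript x y n := by
  obtain ⟨u, t, hsplit, htt, hch⟩ := hI
  have hcnt : u.length ≤ 2 * u.count false + 1 := chain_len u hch
  have hlenfl : (fl pr x y S).length = S.length := fl_length pr x y S
  have hincoS : inco pr x y S = u.count false := by
    rw [inco, hsplit, List.count_append, count_false_all_true _ htt, Nat.add_zero]
  have hwle : u.length ≤ S.length := by
    have : u.length ≤ (fl pr x y S).length := by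
      rw [hsplit]; simp
    omega
  have hdropfl : fl pr x y (S.drop u.length) = t := by
    rw [fl_drop, hsplit, List.drop_left]
  have hincodrop : inco pr x y (S.drop u.length) = 0 := by
    rw [inco, hdropfl, count_false_all_true _ htt]
  have htr := allcoh_transcript pr x y _ hincodrop
  have hlendrop : (S.drop u.length).length = S.length - u.length := List.length_drop
  have hnle : n ≤ (S.drop u.length).length := by
    rw [psi] at hpsi
    rw [hlendrop]
    have h3 : (n:ℤ) + 1 ≤ (S.length : ℤ) - 3 * (u.count false : ℤ) := by
      rw [hincoS] at hpsi; exact_mod_cast hpsi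
    omega
  have hs : S = S.take u.length ++ S.drop u.length := (List.take_append_drop _ _).symm
  calc (S.reverse).take n
      = ((S.drop u.length).reverse ++ (S.take u.length).reverse).take n := by
        conv_lhs => rw [hs]
        rw [List.reverse_append]
    _ = ((S.drop u.length).reverse).take n := by
        rw [List.take_append_of_le_length (by simpa using hnle)]
    _ = (pr.transcript x y (S.drop u.length).length).take n := by rw [htr]
    _ = pr.transcript x y n := transcript_take pr x y _ n hnle


/-! ### Counting flips vs corruptions -/

lemma flips_eq_sum (l : List Bool) (st : St) :
    flips κ pr x y st l = ∑ i ∈ Finset.range l.length,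
      (if l.getD i false = hb pr x y ((l.take i).foldl (stepSt κ) st) then 0 else 1) := by
  induction l generalizing st with
  | nil => simp [flips]
  | cons b rest ih =>
    rw [flips, ih (stepSt κ st b)]
    rw [List.length_cons, Finset.sum_range_succ']
    simp only [List.getD_cons_succ, List.getD_cons_zero, List.take_succ_cons,
      List.take_zero, List.foldl_cons, List.foldl_nil]
    omega

/-! ### The protocol -/

def Prot (pr : AltProtocol X Y) (n κ N : ℕ) : FeedbackProtocol Bool X Y (List Bool) N where
  ord h := (stOf κ h).1.length % 2 == 0
  nextA x' h := steer (stOf κ h).2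
    (if oksA pr x' (stOf κ h).1 then (false, pr.nextA x' (stOf κ h).1.reverse) else (true, false))
  nextB y' h := steer (stOf κ h).2
    (if oksB pr y' (stOf κ h).1 then (false, pr.nextB y' (stOf κ h).1.reverse) else (true, false))
  outA _ h := ((stOf κ h).1.reverse).take n
  outB _ h := ((stOf κ h).1.reverse).take n

lemma sent_eq {N : ℕ} (n : ℕ) (r : Fin N → Bool) (i : Fin N) :
    (Prot pr n κ N).sent x y r i = hb pr x y (stOf κ ((List.ofFn r).take i.val)) := by
  rw [FeedbackProtocol.sent]
  set h := (List.ofFn r).take i.val with hh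
  set S := (stOf κ h).1 with hS
  have hord : (Prot pr n κ N).ord h = (S.length % 2 == 0) := rfl
  rw [hord, hb, aimS, okN, nxt]
  by_cases hp : S.length % 2 = 0
  · rw [if_pos (by simp [hp]), if_pos hp, if_pos hp]
    rfl
  · rw [if_neg (by simp [hp]), if_neg hp, if_neg hp]
    rfl

lemma corruptions_eq {N : ℕ} (n : ℕ) (r : Fin N → Bool) :
    (Prot pr n κ N).corruptions x y r = flips κ pr x y ([], .root) (List.ofFn r) := by
  have hlen : (List.ofFn r).length = N := List.length_ofFn
  rw [FeedbackProtocol.corruptions, flips_eq_sum, hlen, Finset.card_filter]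
  rw [← Fin.sum_univ_eq_sum_range
    (fun m => (if (List.ofFn r).getD m false =
        hb pr x y (((List.ofFn r).take m).foldl (stepSt κ) ([], W.root)) then 0 else 1)) N]
  apply Finset.sum_congr rfl
  intro i _
  have hsent := sent_eq κ pr x y n r i
  have hr : (List.ofFn r).getD i.val false = r i := by
    rw [List.getD_eq_getElem _ _ (by rw [hlen]; exact i.isLt)]
    simp
  simp only [hsent, hr, stOf]
  by_cases he : r i = hb pr x y (((List.ofFn r).take i.val).foldl (stepSt κ) ([], W.root))
  · rw [if_pos he, if_neg (by simp [he])]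
  · rw [if_neg he, if_pos (by simp [Ne, eq_comm] at he ⊢; exact he)]

lemma INV_init : INV pr x y [] := ⟨[], [], rfl, by simp, List.isChain_nil⟩

lemma J_init : J κ pr x y ([], .root) = -(κ:ℤ) * (6*κ+1) := by
  rw [J]
  simp [psi, inco, fl, rho, dlt]

lemma final (hκ : 1 ≤ κ) (n N : ℕ) (hN : N = 6 * (κ * (6*κ+2)) * n) (hn1 : 1 ≤ n)
    (ε : ℝ) (hε : 0 < ε) (hκε : 1 ≤ 3*(κ:ℝ)*ε)
    (r : Fin N → Bool)
    (hcor : (((Prot pr n κ N).corruptions x y r : ℕ) : ℝ) ≤ (1/3 - ε) * N) :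
    ((stOf κ (List.ofFn r)).1.reverse).take n = pr.transcript x y n := by
  set l := List.ofFn r with hl
  have hlen : l.length = N := List.length_ofFn
  obtain ⟨hIf, hWf, hJ⟩ := run κ pr x y hκ l ([], .root) (INV_init pr x y) trivial
  rw [J_init] at hJ
  set SN := l.foldl (stepSt κ) ([], W.root) with hSN
  have hstf : stOf κ l = SN := rfl
  set F := flips κ pr x y ([], .root) l with hF
  have hFcor : (Prot pr n κ N).corruptions x y r = F := corruptions_eq κ pr x y n r
  -- J final ≤ Amp * psi
  have hrho := rho_nonneg κ SN.2 (aimS pr x y SN.1) hWf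
  have hdlt := dlt_nonneg κ SN.2 (aimS pr x y SN.1) hWf
  have hkz : (0:ℤ) ≤ (κ:ℤ) := by positivity
  have hJle : J κ pr x y SN ≤ Amp κ * psi pr x y SN.1 := by
    have h1 : J κ pr x y SN = Amp κ * psi pr x y SN.1 - κ * rho κ SN.2 (aimS pr x y SN.1)
        - (κ+1) * dlt SN.2 (aimS pr x y SN.1) := by
      rw [J]
    nlinarith [mul_nonneg hkz hrho, mul_nonneg (by positivity : (0:ℤ) ≤ (κ:ℤ)+1) hdlt]
  -- integer inequality
  have hZ : Amp κ * psi pr x y SN.1 ≥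
      -(κ:ℤ) * (6*κ+1) + κ * l.length - (3*κ+1) * F := by
    calc Amp κ * psi pr x y SN.1 ≥ J κ pr x y SN := hJle
    _ ≥ _ := hJ
  rw [hlen] at hZ
  -- move to the reals
  set P : ℤ := psi pr x y SN.1 with hP
  set K : ℝ := (κ : ℝ) with hK
  have hK1 : (1:ℝ) ≤ K := by rw [hK]; exact_mod_cast hκ
  have hR : K*(6*K+2) * (P:ℝ) ≥ -K*(6*K+1) + K*N - (3*K+1)*(F:ℝ) := by
    have := hZ
    have hAmpR : ((Amp κ : ℤ) : ℝ) = K*(6*K+2) := by rw [Amp]; push_cast; ring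
    calc K*(6*K+2) * (P:ℝ) = ((Amp κ * P : ℤ) : ℝ) := by push_cast [← hAmpR]; ring
    _ ≥ ((-(κ:ℤ) * (6*κ+1) + κ * N - (3*κ+1) * F : ℤ) : ℝ) := by exact_mod_cast hZ
    _ = -K*(6*K+1) + K*N - (3*K+1)*(F:ℝ) := by push_cast; ring
  have hFle : (F:ℝ) ≤ (1/3 - ε)*N := by rw [← hFcor]; exact hcor
  have hN0 : (0:ℝ) ≤ (N:ℝ) := by positivity
  have h2' : (3*K+1)*(1/3-ε) ≤ K - 2/3 := by nlinarith [hκε, hε.le]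
  have h1 : (3*K+1)*(F:ℝ) ≤ ((3*K+1)*(1/3-ε))*(N:ℝ) := by
    have := mul_le_mul_of_nonneg_left hFle (by linarith : (0:ℝ) ≤ 3*K+1)
    linarith [this]
  have h2 : ((3*K+1)*(1/3-ε))*(N:ℝ) ≤ (K - 2/3)*(N:ℝ) :=
    mul_le_mul_of_nonneg_right h2' hN0
  have hNval : (N:ℝ) = 6*(K*(6*K+2))*n := by rw [hN]; push_cast; ring
  have hn1' : (1:ℝ) ≤ (n:ℝ) := by exact_mod_cast hn1
  have hstep : K*(6*K+2) * (P:ℝ) ≥ (2/3)*(N:ℝ) - K*(6*K+1) := by linarith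
  have h3 : K*(6*K+2) * ((n:ℝ)+1) ≤ (2/3)*(N:ℝ) - K*(6*K+1) := by
    rw [hNval]
    nlinarith [hK1, hn1', sq_nonneg K]
  have hfin : K*(6*K+2) * ((n:ℝ)+1) ≤ K*(6*K+2) * (P:ℝ) := by linarith
  have hpos : (0:ℝ) < K*(6*K+2) := by nlinarith [hK1]
  have hPreal : (n:ℝ) + 1 ≤ (P:ℝ) := le_of_mul_le_mul_left hfin hpos
  have hpsi : (n:ℤ) + 1 ≤ P := by exact_mod_cast hPreal
  exact decode_ok pr x y SN.1 n hIf hpsi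

end FB

/-- For every ε with 0 < ε < 1/3 and every noiseless alternating binary
protocol π of length n, there is a deterministic robust feedback protocol over the
binary alphabet (the order of speaking may depend on the noise via the jointly known
received bits), of length N ≤ c·n/ε² for an absolute constant c > 0, such that for
every input pair and every noise pattern with at most (1/3 − ε)·N corrupted rounds
(bit flips), both parties output the transcript π(x,y). -/
theorem feedback_arbitrary_order_binary :
    ∃ c : ℝ, 0 < c ∧
      ∀ (X Y : Type) (pr : AltProtocol X Y) (n : ℕ) (ε : ℝ),
        0 < ε → ε < 1/3 →
        ∃ (N : ℕ) (P : FeedbackProtocol Bool X Y (List Bool) N),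
          (N : ℝ) ≤ c * n / ε ^ 2 ∧
          ∀ (x : X) (y : Y) (r : Fin N → Bool),
            (P.corruptions x y r : ℝ) ≤ (1/3 - ε) * N →
            P.outA x (List.ofFn r) = pr.transcript x y n ∧
            P.outB y (List.ofFn r) = pr.transcript x y n := by
  refine ⟨100, by norm_num, ?_⟩
  intro X Y pr n ε hε hε3
  set κ := ⌈1/(3*ε)⌉₊ with hκdef
  have h3ε : (0:ℝ) < 3*ε := by linarith
  have hκ1 : 1 ≤ κ := by
    rw [hκdef]
    rw [Nat.one_le_iff_ne_zero, ← Nat.pos_iff_ne_zero]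
    exact Nat.ceil_pos.mpr (by positivity)
  have hle : 1/(3*ε) ≤ (κ:ℝ) := Nat.le_ceil _
  have hκε : 1 ≤ 3*(κ:ℝ)*ε := by
    rw [div_le_iff₀ h3ε] at hle
    linarith
  have hinv1 : (1:ℝ) ≤ 1/(3*ε) := by
    rw [le_div_iff₀ h3ε]
    linarith
  have hub : (κ:ℝ) ≤ 2/(3*ε) := by
    have h1 : (κ:ℝ) < 1/(3*ε) + 1 := Nat.ceil_lt_add_one (by positivity)
    have h2 : 1/(3*ε) + 1 ≤ 2/(3*ε) := by
      have : (2:ℝ)/(3*ε) = 1/(3*ε) + 1/(3*ε) := by ring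
      linarith
    linarith
  have hKε : 3*(κ:ℝ)*ε ≤ 2 := by
    rw [le_div_iff₀ h3ε] at hub
    linarith
  refine ⟨6*(κ*(6*κ+2))*n, FB.Prot pr n κ _, ?_, ?_⟩
  · -- length bound
    have hNR : ((6*(κ*(6*κ+2))*n : ℕ) : ℝ) = 6*((κ:ℝ)*(6*(κ:ℝ)+2))*(n:ℝ) := by
      push_cast; ring
    rw [hNR, le_div_iff₀ (by positivity : (0:ℝ) < ε^2)]
    have hn0 : (0:ℝ) ≤ (n:ℝ) := by positivity
    have hK1 : (1:ℝ) ≤ (κ:ℝ) := by exact_mod_cast hκ1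
    have hKε0 : (0:ℝ) ≤ (κ:ℝ)*ε := by positivity
    nlinarith [mul_nonneg hn0 (mul_nonneg hKε0 hKε0), mul_nonneg hn0 hKε0,
      mul_nonneg hn0 hε.le, sq_nonneg ((κ:ℝ)*ε), hε.le]
  · intro x y r hcor
    by_cases hn : n = 0
    · subst hn
      constructor
      · show ((FB.stOf κ (List.ofFn r)).1.reverse).take 0 = pr.transcript x y 0
        rfl
      · show ((FB.stOf κ (List.ofFn r)).1.reverse).take 0 = pr.transcript x y 0
        rfl
    · have hmain := FB.final κ pr x y hκ1 n (6*(κ*(6*κ+2))*n) rfl (by omega)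
        ε hε hκε r (by exact_mod_cast hcor)
      exact ⟨hmain, hmain⟩
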